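/- Let (P, ≤) be a finite partially ordered set with greatest element ⊤, and let (g_n)_{n≥1} be an i.i.d. sequence of random monotone functions P → P (i.e., i.i.d. random elements of the finite set of order-preserving self-maps of P). For n ≥ 1, set f_n := g_1 ∘ g_2 ∘ ⋯ ∘ g_n (backward composition). Then: (i) almost surely, f_{n+1}(⊤) ≤ f_n(⊤) for every n, so (f_n(⊤))_{n≥1} is eventually constant with almost-sure limit σ; (ii) for every n, f_n(⊤) has the same distribution as g_n ∘ g_{n−1} ∘ ⋯ ∘ g_1(⊤); and (iii) if the distributions of g_n ∘ ⋯ ∘ g_1(⊤) converge (pointwise on P) to a probability measure π, then σ has law π. -/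

import Mathlib

open MeasureTheory ProbabilityTheory

/-- The backward composition `g 0 ∘ g 1 ∘ ⋯ ∘ g (n-1)` (with `g n` playing the role of the
`(n+1)`-st map `g_{n+1}`): `backComp g n = g_1 ∘ g_2 ∘ ⋯ ∘ g_n`. -/
def backComp {Ω P : Type*} (g : ℕ → Ω → P → P) : ℕ → Ω → P → P
  | 0 => fun _ => id
  | n + 1 => fun ω => backComp g n ω ∘ g n ω

/-- The forward composition `g (n-1) ∘ ⋯ ∘ g 1 ∘ g 0`: `fwdComp g n = g_n ∘ ⋯ ∘ g_2 ∘ g_1`. -/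
def fwdComp {Ω P : Type*} (g : ℕ → Ω → P → P) : ℕ → Ω → P → P
  | 0 => fun _ => id
  | n + 1 => fun ω => g n ω ∘ fwdComp g n ω

section Aux

variable {Ω P : Type*}

/-- composition of a tuple of maps, first applied last: tupComp v = v 0 ∘ v 1 ∘ ⋯ -/
def tupComp : ∀ n, (Fin n → P → P) → P → P
  | 0, _ => id
  | n + 1, v => v 0 ∘ tupComp n (fun i => v i.succ)

lemma backComp_succ_left (g : ℕ → Ω → P → P) (n : ℕ) (ω : Ω) :
    backComp g (n + 1) ω = g 0 ω ∘ backComp (fun k => g (k + 1)) n ω := by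
  induction n with
  | zero => rfl
  | succ n ih =>
      show backComp g (n + 1) ω ∘ g (n + 1) ω = _
      rw [ih]
      rfl

lemma backComp_eq_tupComp (g : ℕ → Ω → P → P) (n : ℕ) (ω : Ω) :
    backComp g n ω = tupComp n (fun i : Fin n => g i ω) := by
  induction n generalizing g with
  | zero => rfl
  | succ n ih =>
      rw [backComp_succ_left, ih]
      show _ = (fun i : Fin (n+1) => g i ω) 0 ∘ tupComp n (fun i => g (i.succ : Fin (n+1)) ω)
      congr 1

lemma fwdComp_eq_tupComp (g : ℕ → Ω → P → P) (n : ℕ) (ω : Ω) :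
    fwdComp g n ω = tupComp n (fun i : Fin n => g (n - 1 - (i : ℕ)) ω) := by
  induction n with
  | zero => rfl
  | succ n ih =>
      show g n ω ∘ fwdComp g n ω = _
      rw [ih]
      show _ = (fun i : Fin (n+1) => g (n - (i : ℕ)) ω) 0 ∘
        tupComp n (fun i : Fin n => g (n - ((i.succ : Fin (n+1)) : ℕ)) ω)
      simp only [Fin.val_zero, Fin.val_succ, Nat.sub_zero]
      have e1 : (fun i : Fin n => g (n - ((i : ℕ) + 1)) ω)
          = fun i : Fin n => g (n - 1 - (i : ℕ)) ω := by
        funext i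
        have : n - ((i : ℕ) + 1) = n - 1 - (i : ℕ) := by omega
        rw [this]
      rw [e1]

end Aux

open Function in
lemma map_tuple_eq_pi {Ω : Type*} [MeasurableSpace Ω] {β : Type*} [MeasurableSpace β]
    (μ : Measure Ω) [IsProbabilityMeasure μ] (g : ℕ → Ω → β)
    (hmeas : ∀ n, Measurable (g n))
    (hindep : iIndepFun g μ)
    (n : ℕ) (e : Fin n → ℕ) (he : Function.Injective e) :
    Measure.map (fun ω => fun i : Fin n => g (e i) ω) μ
      = Measure.pi (fun i => Measure.map (g (e i)) μ) := by
  haveI : ∀ i : Fin n, IsProbabilityMeasure (Measure.map (g (e i)) μ) :=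
    fun i => Measure.isProbabilityMeasure_map (hmeas (e i)).aemeasurable
  have htuple : Measurable (fun ω => fun i : Fin n => g (e i) ω) :=
    measurable_pi_lambda _ fun i => hmeas (e i)
  refine (Measure.pi_eq fun s hs => ?_).symm
  classical
  set sets : ℕ → Set β := fun m => if h : ∃ i, e i = m then s h.choose else Set.univ with hsets
  have hse : ∀ i : Fin n, sets (e i) = s i := by
    intro i
    have h : ∃ j, e j = e i := ⟨i, rfl⟩
    simp only [hsets, dif_pos h]
    exact congrArg s (he h.choose_spec)
  have key := hindep.measure_inter_preimage_eq_mul (S := Finset.image e Finset.univ)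
    (sets := sets) (fun m hm => by
      rcases Finset.mem_image.1 hm with ⟨i, _, rfl⟩
      rw [hse]; exact hs i)
  rw [Measure.map_apply htuple (MeasurableSet.univ_pi hs)]
  have hpre : (fun ω => fun i : Fin n => g (e i) ω) ⁻¹' Set.pi Set.univ s
      = ⋂ m ∈ Finset.image e Finset.univ, g m ⁻¹' sets m := by
    ext ω
    simp only [Set.mem_preimage, Set.mem_pi, Set.mem_univ, true_imp_iff, Set.mem_iInter,
      Finset.mem_image, Finset.mem_univ, true_and]
    constructor
    · rintro h m ⟨i, rfl⟩
      rw [hse]; exact h i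
    · intro h i
      have := h (e i) ⟨i, rfl⟩
      rwa [hse] at this
  rw [hpre, key, Finset.prod_image (fun i _ j _ hij => he hij)]
  refine Finset.prod_congr rfl fun i _ => ?_
  rw [hse, Measure.map_apply (hmeas (e i)) (hs i)]

/-- Coupling-from-the-past on a finite poset `P` with greatest element `⊤`.
Let `(g_n)_{n ≥ 1}` be an i.i.d. sequence of random monotone self-maps of `P` (here `g n`
is `g_{n+1}`), and `f_n := g_1 ∘ ⋯ ∘ g_n` the backward composition. Then: (i) almost surely
`f_{n+1}(⊤) ≤ f_n(⊤)` for every `n`, so `(f_n(⊤))` is eventually constant with an a.s.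
limit `σ`; (ii) `f_n(⊤)` has the same distribution as `g_n ∘ ⋯ ∘ g_1 (⊤)`; and (iii) if the
distributions of `g_n ∘ ⋯ ∘ g_1(⊤)` converge pointwise on `P` to a probability measure `π`,
then `σ` has law `π`. -/
theorem stmt16 {P : Type*} [Fintype P] [PartialOrder P] [OrderTop P]
    [MeasurableSpace P] [MeasurableSingletonClass P]
    {Ω : Type*} [MeasurableSpace Ω] (μ : Measure Ω) [IsProbabilityMeasure μ]
    (g : ℕ → Ω → P → P)
    (hmono : ∀ n ω, Monotone (g n ω))
    (hmeas : ∀ n, Measurable (g n))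
    (hindep : iIndepFun g μ)
    (hident : ∀ n m : ℕ, Measure.map (g n) μ = Measure.map (g m) μ) :
    (∀ᵐ ω ∂μ, (∀ n : ℕ, backComp g (n + 1) ω ⊤ ≤ backComp g n ω ⊤) ∧
        ∃ N : ℕ, ∀ n : ℕ, N ≤ n → backComp g n ω ⊤ = backComp g N ω ⊤) ∧
      (∀ n : ℕ, Measure.map (fun ω => backComp g n ω ⊤) μ =
        Measure.map (fun ω => fwdComp g n ω ⊤) μ) ∧
      ∃ σ : Ω → P, Measurable σ ∧
        (∀ᵐ ω ∂μ, ∃ N : ℕ, ∀ n : ℕ, N ≤ n → backComp g n ω ⊤ = σ ω) ∧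
        ∀ π : Measure P, IsProbabilityMeasure π →
          (∀ x : P, Filter.Tendsto
              (fun n : ℕ => Measure.map (fun ω => fwdComp g n ω ⊤) μ {x})
              Filter.atTop (nhds (π {x}))) →
          Measure.map σ μ = π := by
  classical
  -- measurability of the backward composition
  have hbackmeas : ∀ n, Measurable (backComp g n) := by
    intro n
    induction n with
    | zero => exact measurable_const
    | succ n ih =>
        have hrw : backComp g (n + 1)
            = (fun p : (P → P) × (P → P) => p.1 ∘ p.2)
              ∘ (fun ω => (backComp g n ω, g n ω)) := rfl
        rw [hrw]
        exact (measurable_of_finite _).comp (ih.prodMk (hmeas n))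
  have hb : ∀ n, Measurable (fun ω => backComp g n ω ⊤) :=
    fun n => (measurable_pi_apply ⊤).comp (hbackmeas n)
  -- monotonicity of the backward composition
  have hmonoback : ∀ n ω, Monotone (backComp g n ω) := by
    intro n
    induction n with
    | zero => exact fun ω => monotone_id
    | succ n ih => exact fun ω => (ih ω).comp (hmono n ω)
  have hdec : ∀ ω (n : ℕ), backComp g (n + 1) ω ⊤ ≤ backComp g n ω ⊤ :=
    fun ω n => hmonoback n ω le_top
  -- stabilization
  have hstab : ∀ ω, ∃ N, ∀ n, N ≤ n → backComp g n ω ⊤ = backComp g N ω ⊤ := by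
    intro ω
    have hanti : Antitone (fun n => backComp g n ω ⊤) :=
      antitone_nat_of_succ_le fun n => hdec ω n
    obtain ⟨x, ⟨N, rfl⟩, hmin⟩ := Set.Finite.exists_minimalFor id
      (Set.range fun n => backComp g n ω ⊤) (Set.toFinite _) ⟨_, ⟨0, rfl⟩⟩
    exact ⟨N, fun n hn => le_antisymm (hanti hn) (hmin ⟨n, rfl⟩ (hanti hn))⟩
  -- the limit
  set σ : Ω → P := fun ω => backComp g (hstab ω).choose ω ⊤ with hσdef
  have hσ : ∀ ω (n : ℕ), (hstab ω).choose ≤ n → backComp g n ω ⊤ = σ ω :=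
    fun ω n hn => (hstab ω).choose_spec n hn
  have hσ_pre : ∀ x : P, σ ⁻¹' {x}
      = ⋃ N : ℕ, ⋂ n : ℕ, {ω | N ≤ n → backComp g n ω ⊤ = x} := by
    intro x
    ext ω
    simp only [Set.mem_preimage, Set.mem_singleton_iff, Set.mem_iUnion, Set.mem_iInter,
      Set.mem_setOf_eq]
    constructor
    · intro h
      exact ⟨(hstab ω).choose, fun n hn => (hσ ω n hn).trans h⟩
    · rintro ⟨N, hN⟩
      have h1 := hN (max N (hstab ω).choose) (le_max_left _ _)
      have h2 := hσ ω (max N (hstab ω).choose) (le_max_right _ _)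
      rw [← h2, h1]
  have hσmeas : Measurable σ := by
    apply measurable_to_countable'
    intro x
    rw [hσ_pre x]
    refine MeasurableSet.iUnion fun N => MeasurableSet.iInter fun n => ?_
    by_cases h : N ≤ n
    · simp only [h, true_implies]
      exact hb n (measurableSet_singleton x)
    · simp [h]
  -- part (ii)
  have hkey : ∀ n : ℕ, Measure.map (fun ω => backComp g n ω ⊤) μ =
      Measure.map (fun ω => fwdComp g n ω ⊤) μ := by
    intro n
    have e2inj : Function.Injective (fun i : Fin n => n - 1 - (i : ℕ)) := by
      intro i j h
      have hi := i.isLt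
      have hj := j.isLt
      have hval : n - 1 - (i : ℕ) = n - 1 - (j : ℕ) := h
      exact Fin.val_injective (by omega)
    have h1 : (fun ω => backComp g n ω ⊤)
        = (fun v : Fin n → P → P => tupComp n v ⊤)
          ∘ (fun ω => fun i : Fin n => g ((i : ℕ)) ω) := by
      funext ω
      simp only [Function.comp_apply, backComp_eq_tupComp]
    have h2 : (fun ω => fwdComp g n ω ⊤)
        = (fun v : Fin n → P → P => tupComp n v ⊤)
          ∘ (fun ω => fun i : Fin n => g (n - 1 - (i : ℕ)) ω) := by
      funext ω
      simp only [Function.comp_apply, fwdComp_eq_tupComp]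
    rw [h1, h2,
      ← Measure.map_map (measurable_of_finite _) (measurable_pi_lambda _ fun i => hmeas _),
      ← Measure.map_map (measurable_of_finite _) (measurable_pi_lambda _ fun i => hmeas _),
      map_tuple_eq_pi μ g hmeas hindep n _ Fin.val_injective,
      map_tuple_eq_pi μ g hmeas hindep n _ e2inj]
    have hmarg : (fun i : Fin n => Measure.map (g ((i : ℕ))) μ)
        = fun i : Fin n => Measure.map (g (n - 1 - (i : ℕ))) μ :=
      funext fun i => hident _ _
    rw [hmarg]
  refine ⟨ae_of_all μ fun ω => ⟨fun n => hdec ω n, hstab ω⟩, hkey, σ, hσmeas,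
    ae_of_all μ fun ω => ⟨(hstab ω).choose, fun n hn => hσ ω n hn⟩, ?_⟩
  -- part (iii)
  intro π hπ htend
  have hlim : ∀ x : P, Filter.Tendsto (fun n => μ ((fun ω => backComp g n ω ⊤) ⁻¹' {x}))
      Filter.atTop (nhds (μ (σ ⁻¹' {x}))) := by
    intro x
    apply tendsto_measure_of_tendsto_indicator_of_isFiniteMeasure Filter.atTop μ
      (fun n => hb n (measurableSet_singleton x))
    intro ω
    filter_upwards [Filter.eventually_ge_atTop (hstab ω).choose] with m hm
    simp only [Set.mem_preimage, Set.mem_singleton_iff, hσ ω m hm]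
  refine Measure.ext_of_singleton fun x => ?_
  rw [Measure.map_apply hσmeas (measurableSet_singleton x)]
  have heq : (fun n : ℕ => Measure.map (fun ω => fwdComp g n ω ⊤) μ {x})
      = fun n : ℕ => μ ((fun ω => backComp g n ω ⊤) ⁻¹' {x}) := by
    funext n
    rw [← hkey n, Measure.map_apply (hb n) (measurableSet_singleton x)]
  have h1 := htend x
  rw [heq] at h1
  exact tendsto_nhds_unique (hlim x) h1
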